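/- Let a_1, …, a_N be nonzero complex numbers and let F_1, …, F_N : (0,∞) → ℂ be measurable with |F_j(p)| ≤ C(1+p)^m. Define c_k = ∑_{j=1}^N a_j^{-k} ∫₀^∞ e^{-kp} F_j(p) dp for k ≥ 1. Then the power series ∑_{k≥1} c_k z^k has radius of convergence at least min_j |a_j|, and for |z| < min_j |a_j|, ∑_{k=1}^∞ c_k z^k = z ∑_{j=1}^N ∫₀^∞ F_j(ln(1+s)) / ((1+s)(a_j(1+s) − z)) ds. -/

import Mathlib

open MeasureTheory Set Real

lemma aux_poly18 (m : ℕ) {p : ℝ} (hp : 0 ≤ p) :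
    (1 + p) ^ m ≤ (2 * m + 2 : ℝ) ^ m * Real.exp (p / 2) := by
  have hMpos : (0:ℝ) < 2 * m + 2 := by positivity
  have h1 : (1 + p) ≤ (2 * m + 2 : ℝ) * Real.exp (p / (2 * m + 2)) := by
    have he := Real.add_one_le_exp (p / (2 * m + 2))
    calc 1 + p ≤ (2*(m:ℝ)+2) * (1 + p/(2*m+2)) := by
          rw [mul_add, mul_one, mul_div_cancel₀ _ hMpos.ne']
          nlinarith
      _ ≤ (2*(m:ℝ)+2) * Real.exp (p/(2*m+2)) := by
          apply mul_le_mul_of_nonneg_left (by linarith) hMpos.le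
  calc (1+p)^m ≤ ((2*(m:ℝ)+2) * Real.exp (p/(2*m+2)))^m :=
        pow_le_pow_left₀ (by linarith) h1 m
    _ = (2*(m:ℝ)+2)^m * Real.exp ((m:ℝ) * (p/(2*m+2))) := by
        rw [mul_pow, Real.exp_nat_mul]
    _ ≤ (2*(m:ℝ)+2)^m * Real.exp (p/2) := by
        gcongr
        rw [mul_div_assoc', div_le_div_iff₀ hMpos two_pos]
        nlinarith

lemma aux_subst18 (f : ℝ → ℂ) :
    ∫ p in Ioi (0:ℝ), f p
      = ∫ s in Ioi (0:ℝ), ((1 + s)⁻¹ : ℝ) • f (Real.log (1 + s)) := by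
  have himg : (fun s : ℝ => Real.log (1 + s)) '' Ioi 0 = Ioi 0 := by
    ext p
    constructor
    · rintro ⟨s, hs, rfl⟩
      simp only [mem_Ioi] at hs ⊢
      exact Real.log_pos (by linarith)
    · intro hp
      simp only [mem_Ioi] at hp
      refine ⟨Real.exp p - 1, ?_, ?_⟩
      · simp only [mem_Ioi]
        nlinarith [Real.add_one_le_exp p]
      · show Real.log (1 + (rexp p - 1)) = p
        rw [show 1 + (rexp p - 1) = rexp p by ring, Real.log_exp]
  have hderiv : ∀ s ∈ Ioi (0:ℝ),
      HasDerivWithinAt (fun s : ℝ => Real.log (1 + s)) ((1 + s)⁻¹) (Ioi 0) s := by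
    intro s hs
    simp only [mem_Ioi] at hs
    have h1 : (0:ℝ) < 1 + s := by linarith
    have : HasDerivAt (fun s : ℝ => Real.log (1 + s)) ((1 + s)⁻¹ * 1) s :=
      (Real.hasDerivAt_log h1.ne').comp s ((hasDerivAt_id s).const_add 1)
    simpa using this.hasDerivWithinAt
  have hinj : InjOn (fun s : ℝ => Real.log (1 + s)) (Ioi 0) := by
    intro x hx y hy hxy
    simp only [mem_Ioi] at hx hy
    have := Real.log_injOn_pos (by simp only [mem_Ioi]; linarith : (1+x) ∈ Ioi (0:ℝ))
      (by simp only [mem_Ioi]; linarith : (1+y) ∈ Ioi (0:ℝ)) hxy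
    linarith
  calc ∫ p in Ioi (0:ℝ), f p
      = ∫ p in (fun s : ℝ => Real.log (1 + s)) '' Ioi 0, f p := by rw [himg]
    _ = ∫ s in Ioi (0:ℝ), |(1 + s)⁻¹| • f (Real.log (1 + s)) :=
        integral_image_eq_integral_abs_deriv_smul measurableSet_Ioi hderiv hinj f
    _ = ∫ s in Ioi (0:ℝ), ((1 + s)⁻¹ : ℝ) • f (Real.log (1 + s)) := by
        refine setIntegral_congr_fun measurableSet_Ioi fun s hs => ?_
        simp only [mem_Ioi] at hs
        rw [abs_of_pos (by positivity)]

theorem stmt18 (N : ℕ) (hN : 1 ≤ N) (a : Fin N → ℂ) (ha : ∀ j, a j ≠ 0)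
    (F : Fin N → ℝ → ℂ) (hFm : ∀ j, Measurable (F j))
    (C : ℝ) (m : ℕ) (hbound : ∀ j, ∀ p > 0, ‖F j p‖ ≤ C * (1 + p) ^ m)
    (c : ℕ → ℂ)
    (hc : ∀ k : ℕ, 1 ≤ k → c k = ∑ j, (a j) ^ (-(k : ℤ)) *
      ∫ p in Ioi (0 : ℝ), Complex.exp (-(k : ℂ) * p) * F j p)
    (z : ℂ) (hz : ∀ j, ‖z‖ < ‖a j‖) :
    Summable (fun k : ℕ => c (k + 1) * z ^ (k + 1)) ∧
    ∑' k : ℕ, c (k + 1) * z ^ (k + 1) =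
      z * ∑ j, ∫ s in Ioi (0 : ℝ),
        F j (Real.log (1 + s)) /
          (((1 + s : ℝ) : ℂ) * (a j * ((1 + s : ℝ) : ℂ) - z)) := by
  -- basic positivity facts
  have j0 : Fin N := ⟨0, hN⟩
  have hC : 0 ≤ C := by
    have h1 := hbound j0 1 one_pos
    have h2 : (0:ℝ) ≤ C * (1+1)^m := le_trans (norm_nonneg _) h1
    nlinarith [pow_pos (show (0:ℝ) < 1+1 by norm_num) m]
  set D : ℝ := C * (2*m+2)^m with hD
  have hD0 : 0 ≤ D := by positivity
  have hF2 : ∀ j, ∀ p > (0:ℝ), ‖F j p‖ ≤ D * Real.exp (p/2) := by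
    intro j p hp
    calc ‖F j p‖ ≤ C * (1+p)^m := hbound j p hp
      _ ≤ C * ((2*m+2:ℝ)^m * Real.exp (p/2)) := by
          apply mul_le_mul_of_nonneg_left (aux_poly18 m hp.le) hC
      _ = D * Real.exp (p/2) := by rw [hD]; ring
  set r : Fin N → ℝ := fun j => ‖z‖ / ‖a j‖ with hrdef
  have hr0 : ∀ j, 0 ≤ r j := fun j => div_nonneg (norm_nonneg _) (norm_nonneg _)
  have hr1 : ∀ j, r j < 1 := by
    intro j
    rw [hrdef, div_lt_one (lt_of_le_of_lt (norm_nonneg z) (hz j))]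
    exact hz j
  -- the family of integrands
  set g : Fin N → ℕ → ℝ → ℂ := fun j k p =>
    (z / a j) ^ (k+1) * (Complex.exp (-((k:ℂ)+1) * p) * F j p) with hgdef
  -- denominator nonvanishing
  have hdne : ∀ j, ∀ p : ℝ, 0 ≤ p → a j * Complex.exp ↑p - z ≠ 0 := by
    intro j p hp h
    have hzz : z = a j * Complex.exp ↑p := by linear_combination -h
    have : ‖z‖ = ‖a j‖ * Real.exp p := by
      rw [hzz, norm_mul, Complex.norm_exp]
      simp
    have h1 : (1:ℝ) ≤ Real.exp p := Real.one_le_exp hp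
    nlinarith [hz j, norm_nonneg (a j), norm_nonneg z]
  -- norm bound for g
  have hgnorm : ∀ j k, ∀ p ∈ Ioi (0:ℝ),
      ‖g j k p‖ ≤ D * r j ^ (k+1) * Real.exp (-(1/2) * p) := by
    intro j k p hp
    simp only [mem_Ioi] at hp
    have hne : ‖Complex.exp (-((k:ℂ)+1) * ↑p)‖ = Real.exp (-((k:ℝ)+1) * p) := by
      rw [Complex.norm_exp]
      congr 1
      simp [Complex.add_re, Complex.mul_re]
    rw [hgdef]
    simp only [norm_mul, norm_pow, norm_div, hne]
    have hb1 : Real.exp (-((k:ℝ)+1) * p) * ‖F j p‖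
        ≤ Real.exp (-((k:ℝ)+1) * p) * (D * Real.exp (p/2)) := by
      apply mul_le_mul_of_nonneg_left (hF2 j p hp) (Real.exp_nonneg _)
    calc (‖z‖/‖a j‖)^(k+1) * (Real.exp (-((k:ℝ)+1) * p) * ‖F j p‖)
        ≤ (‖z‖/‖a j‖)^(k+1) * (Real.exp (-((k:ℝ)+1) * p) * (D * Real.exp (p/2))) := by
          apply mul_le_mul_of_nonneg_left hb1 (pow_nonneg (hr0 j) _)
      _ = r j ^(k+1) * D * Real.exp (-((k:ℝ)+1) * p + p/2) := by
          rw [Real.exp_add]; ring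
      _ ≤ r j ^(k+1) * D * Real.exp (-(1/2) * p) := by
          gcongr
          nlinarith [Nat.cast_nonneg (α := ℝ) k]
      _ = D * r j ^ (k+1) * Real.exp (-(1/2) * p) := by ring
  -- integrability of g j k
  have hgmeas : ∀ j k, AEStronglyMeasurable (g j k) (volume.restrict (Ioi (0:ℝ))) := by
    intro j k
    apply Measurable.aestronglyMeasurable
    apply Measurable.const_mul
    exact (Complex.measurable_exp.comp (Complex.measurable_ofReal.const_mul _)).mul (hFm j)
  have hbint : ∀ (c : ℝ), IntegrableOn (fun p => c * Real.exp (-(1/2) * p)) (Ioi (0:ℝ)) := by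
    intro c
    exact (exp_neg_integrableOn_Ioi 0 (by norm_num : (0:ℝ) < 1/2)).const_mul c
  have hgint : ∀ j k, IntegrableOn (g j k) (Ioi (0:ℝ)) := by
    intro j k
    apply Integrable.mono' (hbint (D * r j ^ (k+1))) (hgmeas j k)
    exact (ae_restrict_iff' measurableSet_Ioi).2 (ae_of_all _ (hgnorm j k))
  -- bound on the integral of norms
  set K : ℝ := ∫ p in Ioi (0:ℝ), Real.exp (-(1/2) * p) with hK
  have hK0 : 0 ≤ K := integral_nonneg fun p => (Real.exp_nonneg _)
  have hgintnorm : ∀ j k, ∫ p in Ioi (0:ℝ), ‖g j k p‖ ≤ (D * K) * r j ^ (k+1) := by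
    intro j k
    calc ∫ p in Ioi (0:ℝ), ‖g j k p‖
        ≤ ∫ p in Ioi (0:ℝ), D * r j ^ (k+1) * Real.exp (-(1/2) * p) :=
          setIntegral_mono_on (hgint j k).norm (hbint _) measurableSet_Ioi (hgnorm j k)
      _ = D * r j ^ (k+1) * K := by rw [integral_const_mul]
      _ = (D * K) * r j ^ (k+1) := by ring
  have hgeo : ∀ j, Summable (fun k : ℕ => (D * K) * r j ^ (k+1)) := by
    intro j
    apply Summable.congr (((summable_geometric_of_lt_one (hr0 j) (hr1 j)).mul_left
      ((D * K) * r j)))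
    intro k
    rw [pow_succ]
    ring
  have hsumnorm : ∀ j, Summable (fun k : ℕ => ∫ p in Ioi (0:ℝ), ‖g j k p‖) := by
    intro j
    apply Summable.of_nonneg_of_le (fun k => integral_nonneg fun p => norm_nonneg _)
      (fun k => hgintnorm j k) (hgeo j)
  have hsumint : ∀ j, Summable (fun k : ℕ => ∫ p in Ioi (0:ℝ), g j k p) := by
    intro j
    exact Summable.of_norm_bounded (hsumnorm j)
      (fun k => norm_integral_le_integral_norm _)
  -- interchange of sum and integral
  have hswap : ∀ j, ∑' k : ℕ, ∫ p in Ioi (0:ℝ), g j k p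
      = ∫ p in Ioi (0:ℝ), ∑' k : ℕ, g j k p :=
    fun j => integral_tsum_of_summable_integral_norm (hgint j) (hsumnorm j)
  -- pointwise geometric sum
  have htsum_pt : ∀ j, ∀ p ∈ Ioi (0:ℝ),
      ∑' k : ℕ, g j k p = z * F j p / (a j * Complex.exp ↑p - z) := by
    intro j p hp
    simp only [mem_Ioi] at hp
    set w : ℂ := z / a j * Complex.exp (-↑p) with hw
    have hwnorm : ‖w‖ < 1 := by
      rw [hw, norm_mul, norm_div, Complex.norm_exp]
      have h1 : Real.exp (-↑p : ℂ).re ≤ 1 := by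
        simp only [Complex.neg_re, Complex.ofReal_re]
        exact Real.exp_le_one_iff.2 (by linarith)
      have := hr1 j
      rw [hrdef] at this
      nlinarith [hr0 j, Real.exp_pos ((-↑p : ℂ).re), this]
    have hpow : ∀ k : ℕ, w ^ (k+1)
        = (z / a j) ^ (k+1) * Complex.exp (-((k:ℂ)+1) * ↑p) := by
      intro k
      rw [hw, mul_pow]
      congr 1
      rw [← Complex.exp_nat_mul]
      congr 1
      push_cast
      ring
    have hgw : ∀ k : ℕ, g j k p = (F j p * w) * w ^ k := by
      intro k
      rw [hgdef]
      simp only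
      linear_combination (-(F j p)) * hpow k
    rw [tsum_congr hgw, tsum_mul_left, tsum_geometric_of_norm_lt_one hwnorm]
    have hexpne : Complex.exp (↑p : ℂ) ≠ 0 := Complex.exp_ne_zero _
    have hdne' := hdne j p hp.le
    have haene : a j * Complex.exp (↑p:ℂ) ≠ 0 := mul_ne_zero (ha j) hexpne
    have hw2 : w = z / (a j * Complex.exp ↑p) := by
      rw [hw, Complex.exp_neg, ← div_eq_mul_inv, div_div]
    have h1w : 1 - w = (a j * Complex.exp ↑p - z) / (a j * Complex.exp ↑p) := by
      rw [hw2, one_sub_div haene]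
    rw [h1w, inv_div, hw2, mul_assoc,
      show z / (a j * Complex.exp ↑p) * (a j * Complex.exp ↑p / (a j * Complex.exp ↑p - z))
        = z / (a j * Complex.exp ↑p - z) from by
          rw [div_mul_div_comm, mul_comm z, mul_div_mul_left _ _ haene]]
    ring
  -- expressing the coefficients
  have hck : ∀ k : ℕ, c (k+1) * z ^ (k+1) = ∑ j, ∫ p in Ioi (0:ℝ), g j k p := by
    intro k
    rw [hc (k+1) (Nat.le_add_left 1 k), Finset.sum_mul]
    apply Finset.sum_congr rfl
    intro j _
    have hcast : ((k+1 : ℕ) : ℂ) = (k:ℂ)+1 := by push_cast; ring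
    have h1 : (∫ p in Ioi (0:ℝ), g j k p)
        = (z / a j) ^ (k+1) * ∫ p in Ioi (0:ℝ), Complex.exp (-((k:ℂ)+1) * p) * F j p := by
      rw [hgdef]
      exact integral_const_mul _ _
    rw [h1]
    have h2 : (a j) ^ (-((k+1 : ℕ) : ℤ)) = ((a j)^(k+1))⁻¹ := by
      rw [zpow_neg, zpow_natCast]
    rw [h2, hcast, div_pow, div_eq_mul_inv]
    ring
  -- summability
  have hsummable : Summable (fun k : ℕ => c (k + 1) * z ^ (k + 1)) := by
    apply Summable.congr (summable_sum (fun j _ => hsumint j))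
    intro k
    exact (hck k).symm
  refine ⟨hsummable, ?_⟩
  -- the computation of the sum
  have hcalc1 : ∑' k : ℕ, c (k + 1) * z ^ (k + 1)
      = ∑ j, ∫ p in Ioi (0:ℝ), z * F j p / (a j * Complex.exp ↑p - z) := by
    rw [tsum_congr hck, Summable.tsum_finsetSum (fun j _ => hsumint j)]
    apply Finset.sum_congr rfl
    intro j _
    rw [hswap j]
    exact setIntegral_congr_fun measurableSet_Ioi (htsum_pt j)
  rw [hcalc1, Finset.mul_sum]
  apply Finset.sum_congr rfl
  intro j _
  have hzpull : ∀ q : ℝ → ℂ, (∫ p in Ioi (0:ℝ), z * q p) = z * ∫ p in Ioi (0:ℝ), q p :=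
    fun q => integral_const_mul z q
  have hstep : (∫ p in Ioi (0:ℝ), z * F j p / (a j * Complex.exp ↑p - z))
      = z * ∫ p in Ioi (0:ℝ), F j p / (a j * Complex.exp ↑p - z) := by
    simp_rw [mul_div_assoc]
    exact hzpull _
  rw [hstep]
  congr 1
  rw [aux_subst18 (fun p => F j p / (a j * Complex.exp ↑p - z))]
  apply setIntegral_congr_fun measurableSet_Ioi
  intro s hs
  simp only [mem_Ioi] at hs
  have h1s : (0:ℝ) < 1 + s := by linarith
  have hexp : Complex.exp (↑(Real.log (1 + s)) : ℂ) = ((1+s : ℝ) : ℂ) := by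
    rw [← Complex.ofReal_exp, Real.exp_log h1s]
  simp only [hexp]
  rw [Complex.real_smul, Complex.ofReal_inv]
  have h1sC : ((1+s:ℝ) : ℂ) ≠ 0 := by
    simp only [ne_eq, Complex.ofReal_eq_zero]
    linarith
  have hd2 : a j * ((1+s:ℝ):ℂ) - z ≠ 0 := by
    intro h
    have hzz : z = a j * ((1+s:ℝ):ℂ) := by linear_combination -h
    have : ‖z‖ = ‖a j‖ * (1+s) := by
      rw [hzz, norm_mul, show ‖((1+s:ℝ):ℂ)‖ = |1+s| from Complex.norm_real _,
        abs_of_pos h1s]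
    nlinarith [hz j, norm_nonneg (a j), norm_nonneg z]
  field_simp
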